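/- For the secondary Hochschild complex C^n(A,B,ε) = Hom_k(A^{⊗(n+1)} ⊗ B^{⊗ n(n+1)/2}, k) with the cyclic operator λ given by (λφ)(matrix with rows a_0,…,a_n) = (−1)^n φ(cyclically permuted matrix with first row a_n, b_{0,n},…,b_{n-1,n}), the operator λ satisfies λ^{n+1} = id on C^n(A,B,ε). -/

import Mathlib

open scoped TensorProduct
open MulOpposite PiTensorProduct

noncomputable section

/-- Index set for the strictly upper triangular positions of an `m × m` matrix. -/
abbrev UT (m : ℕ) := {p : Fin m × Fin m // p.1 < p.2}

/-- The tensor space `A^{⊗ m} ⊗ B^{⊗ m(m-1)/2}` in its matrix representation. -/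
def TS (k A B : Type) [Field k] [Ring A] [Algebra k A] [CommRing B] [Algebra k B]
    (m : ℕ) : Type :=
  (⨂[k] _ : Fin m, A) ⊗[k] (⨂[k] _ : UT m, B)

variable (k A B : Type) [Field k] [Ring A] [Algebra k A] [CommRing B] [Algebra k B]

instance (m : ℕ) : AddCommGroup (TS k A B m) :=
  inferInstanceAs (AddCommGroup ((⨂[k] _ : Fin m, A) ⊗[k] (⨂[k] _ : UT m, B)))

instance (m : ℕ) : Module k (TS k A B m) :=
  inferInstanceAs (Module k ((⨂[k] _ : Fin m, A) ⊗[k] (⨂[k] _ : UT m, B)))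

/-- The secondary Hochschild cochain space `C^n(A,B,ε) = Hom_k(A^{⊗(n+1)} ⊗ B^{⊗ n(n+1)/2}, k)`. -/
abbrev Cc (n : ℕ) : Type := TS k A B (n + 1) →ₗ[k] k

/-- The pure tensor (generator) determined by diagonal entries `a` and
upper-triangular entries `β` (read at indices `< m`). -/
def gen (m : ℕ) (a : ℕ → A) (β : ℕ → ℕ → B) : TS k A B m :=
  (tprod k fun i : Fin m => a i) ⊗ₜ[k] (tprod k fun p : UT m => β p.1.1 p.1.2)

/-- Diagonal of the matrix obtained by merging diagonal entries `i`, `i+1` via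
`a_i a_{i+1} ε(b_{i,i+1})`. -/
def mergeA (ε : B →ₐ[k] A) (i : ℕ) (a : ℕ → A) (β : ℕ → ℕ → B) : ℕ → A :=
  fun j => if j < i then a j else if j = i then a i * a (i + 1) * ε (β i (i + 1)) else a (j + 1)

/-- Preimages of the index `p` under the monotone surjection collapsing `i` and `i+1`. -/
def preim (i p : ℕ) : Finset ℕ :=
  if p < i then {p} else if p = i then {i, i + 1} else {p + 1}

/-- `B`-entries of the matrix obtained by merging rows/columns `i` and `i+1`. -/
def mergeB (i : ℕ) (β : ℕ → ℕ → B) : ℕ → ℕ → B :=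
  fun p q => ∏ u ∈ preim i p, ∏ v ∈ preim i q, β u v

/-- Diagonal of the "cyclic merge": `a_m a_0 ε(b_{0,m})` in position `0`
(top index `m`). -/
def cmergeA (ε : B →ₐ[k] A) (m : ℕ) (a : ℕ → A) (β : ℕ → ℕ → B) : ℕ → A :=
  fun j => if j = 0 then a m * a 0 * ε (β 0 m) else a j

/-- `B`-entries of the cyclic merge: first row becomes `b_{q,m} b_{0,q}`. -/
def cmergeB (m : ℕ) (β : ℕ → ℕ → B) : ℕ → ℕ → B :=
  fun p q => if p = 0 then β q m * β 0 q else β p q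

/-- Diagonal of the cyclically rotated matrix: `a_n` moves to position `0`. -/
def rotA (n : ℕ) (a : ℕ → A) : ℕ → A :=
  fun j => if j = 0 then a n else a (j - 1)

/-- `B`-entries of the cyclically rotated matrix: the first row becomes
`b_{0,n}, …, b_{n-1,n}`. -/
def rotB (n : ℕ) (β : ℕ → ℕ → B) : ℕ → ℕ → B :=
  fun p q => if p = 0 then β (q - 1) n else β (p - 1) (q - 1)

/-!
STATEMENT 5: the cyclic operator `λ` on `C^n(A,B,ε)` given by
`(λφ)(matrix) = (−1)^n φ(cyclically rotated matrix)` satisfies `λ^{n+1} = id`.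
-/

/-- Generators only depend on the relevant entries. -/
lemma gen_congr (m : ℕ) {a a' : ℕ → A} {β β' : ℕ → ℕ → B}
    (ha : ∀ j, j < m → a j = a' j)
    (hβ : ∀ p q, p < q → q < m → β p q = β' p q) :
    gen k A B m a β = gen k A B m a' β' := by
  unfold gen
  congr 1
  · exact congrArg _ (funext fun i => ha i.1 i.isLt)
  · exact congrArg _ (funext fun p => hβ p.1.1 p.1.2 p.2 p.1.2.isLt)

/-- Two functionals agreeing on all generators are equal. -/
lemma hom_ext (m : ℕ) (ψ χ : TS k A B m →ₗ[k] k)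
    (h : ∀ (a : ℕ → A) (β : ℕ → ℕ → B),
      ψ (gen k A B m a β) = χ (gen k A B m a β)) :
    ψ = χ := by
  have key : ∀ (f : Fin m → A) (g : UT m → B),
      ψ ((tprod k f) ⊗ₜ[k] (tprod k g)) = χ ((tprod k f) ⊗ₜ[k] (tprod k g)) := by
    intro f g
    set a : ℕ → A := fun j => if h : j < m then f ⟨j, h⟩ else 0 with ha
    set β : ℕ → ℕ → B := fun u v =>
      if h : u < v ∧ v < m then g ⟨(⟨u, lt_trans h.1 h.2⟩, ⟨v, h.2⟩), h.1⟩ else 1 with hβ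
    have hf : (fun i : Fin m => a i.1) = f := by
      funext i; simp [ha, i.isLt]
    have hg : (fun p : UT m => β p.1.1 p.1.2) = g := by
      funext p
      rcases p with ⟨⟨⟨u, hu⟩, ⟨v, hv⟩⟩, hlt⟩
      have h' : u < v ∧ v < m := ⟨hlt, hv⟩
      simp only [hβ, dif_pos h']
    have := h a β
    unfold gen at this
    rwa [hf, hg] at this
  apply LinearMap.ext
  intro x
  induction x using TensorProduct.induction_on with
  | zero => exact ψ.map_zero.trans χ.map_zero.symm
  | tmul x y =>
    induction x using PiTensorProduct.induction_on with
    | smul_tprod r f =>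
      induction y using PiTensorProduct.induction_on with
      | smul_tprod s g =>
        rw [← TensorProduct.smul_tmul', TensorProduct.tmul_smul]
        erw [map_smul, map_smul,
          map_smul, map_smul, key f g]
      | add u v hu hv =>
        rw [TensorProduct.tmul_add]; erw [map_add, map_add, hu, hv]
    | add u v hu hv =>
      rw [TensorProduct.add_tmul]; erw [map_add, map_add, hu, hv]
  | add u v hu hv => erw [map_add, map_add, hu, hv]

lemma rotA_iter (n : ℕ) :
    ∀ kk, kk ≤ n + 1 → ∀ (a : ℕ → A) (j : ℕ), j ≤ n →
      (rotA A n)^[kk] a j = if j < kk then a (n + 1 + j - kk) else a (j - kk) := by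
  intro kk
  induction kk with
  | zero => intro _ a j _; simp
  | succ kk ih =>
    intro hk a j hj
    rw [Function.iterate_succ_apply']
    show (if j = 0 then (rotA A n)^[kk] a n else (rotA A n)^[kk] a (j - 1)) = _
    by_cases hj0 : j = 0
    · subst hj0
      rw [if_pos rfl, ih (by omega) a n le_rfl]
      split_ifs <;> first | (congr 1; omega) | omega
    · rw [if_neg hj0, ih (by omega) a (j - 1) (by omega)]
      split_ifs <;> first | (congr 1; omega) | omega

lemma rotB_iter (n : ℕ) :
    ∀ kk, kk ≤ n + 1 → ∀ (β : ℕ → ℕ → B) (p q : ℕ), p < q → q ≤ n →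
      (rotB B n)^[kk] β p q =
        if q < kk then β (n + 1 + p - kk) (n + 1 + q - kk)
        else if p < kk then β (q - kk) (n + 1 + p - kk)
        else β (p - kk) (q - kk) := by
  intro kk
  induction kk with
  | zero => intro _ β p q _ _; simp
  | succ kk ih =>
    intro hk β p q hpq hq
    rw [Function.iterate_succ_apply']
    show (if p = 0 then (rotB B n)^[kk] β (q - 1) n
          else (rotB B n)^[kk] β (p - 1) (q - 1)) = _
    by_cases hp0 : p = 0
    · subst hp0
      rw [if_pos rfl, ih (by omega) β (q - 1) n (by omega) le_rfl]
      split_ifs <;> first | (congr 1 <;> omega) | omega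
    · rw [if_neg hp0, ih (by omega) β (p - 1) (q - 1) (by omega) (by omega)]
      split_ifs <;> first | (congr 1 <;> omega) | omega

theorem secondary_cyclic_operator_order
    (ε : B →ₐ[k] A) (hcent : ∀ (b : B) (a : A), ε b * a = a * ε b)
    (lam : ∀ n : ℕ, Module.End k (Cc k A B n))
    (hlam : ∀ (n : ℕ) (φ : Cc k A B n) (a : ℕ → A) (β : ℕ → ℕ → B),
      lam n φ (gen k A B (n + 1) a β) =
        (-1 : ℤ) ^ n • φ (gen k A B (n + 1) (rotA A n a) (rotB B n β))) :
    ∀ n : ℕ, lam n ^ (n + 1) = 1 := by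
  intro n
  have iter : ∀ (kk : ℕ) (φ : Cc k A B n) (a : ℕ → A) (β : ℕ → ℕ → B),
      ((lam n ^ kk) φ) (gen k A B (n + 1) a β) =
        ((-1 : ℤ) ^ n) ^ kk •
          φ (gen k A B (n + 1) ((rotA A n)^[kk] a) ((rotB B n)^[kk] β)) := by
    intro kk
    induction kk with
    | zero => intro φ a β; simp
    | succ kk ih =>
      intro φ a β
      rw [pow_succ', Module.End.mul_apply, hlam n ((lam n ^ kk) φ) a β,
        ih φ (rotA A n a) (rotB B n β), ← Function.iterate_succ_apply,
        ← Function.iterate_succ_apply, smul_smul, ← pow_succ']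
  apply LinearMap.ext
  intro φ
  apply hom_ext
  intro a β
  rw [iter (n + 1) φ a β]
  have hA : ∀ j, j < n + 1 → (rotA A n)^[n + 1] a j = a j := by
    intro j hj
    rw [rotA_iter A n (n + 1) le_rfl a j (by omega), if_pos (by omega)]
    congr 1; omega
  have hB : ∀ p q, p < q → q < n + 1 → (rotB B n)^[n + 1] β p q = β p q := by
    intro p q hpq hq
    rw [rotB_iter B n (n + 1) le_rfl β p q hpq (by omega), if_pos (by omega)]
    congr 1 <;> omega
  rw [gen_congr k A B (n + 1) hA hB, ← pow_mul,
    Even.neg_one_pow (Nat.even_mul_succ_self n), one_smul]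
  rfl

end
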